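/- There exists a nonempty two-dimensional subshift of finite type with no periodic configuration: there exist a finite nonempty alphabet A and relations H ⊆ A × A and V ⊆ A × A such that the set X := {x : ℤ² → A : for all (i,j) ∈ ℤ², (x(i,j), x(i+1,j)) ∈ H and (x(i,j), x(i,j+1)) ∈ V} is nonempty, and no x ∈ X satisfies x(i+a, j+b) = x(i,j) for all (i,j) ∈ ℤ² for some (a,b) ∈ ℤ² ∖ {(0,0)}. -/

import Mathlib

noncomputable section
namespace Stmt12

structure Tile where
  m : Bool
  a : Fin 3
  b : Fin 3
  l : Fin 4
  r : Fin 4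
deriving DecidableEq, Fintype

def iA (t : Tile) : ℤ := t.a.val
def iB (t : Tile) : ℤ := t.b.val
def iL (t : Tile) : ℤ := (t.l.val : ℤ) - 1
def iR (t : Tile) : ℤ := (t.r.val : ℤ) - 1

def valid (t : Tile) : Prop :=
  (t.m = true → iA t ≤ 1 ∧ 1 ≤ iB t ∧ 2 * iA t + iL t - iR t = iB t) ∧
  (t.m = false → 1 ≤ iA t ∧ 2 * iA t + iL t - iR t = 3 * iB t)

def Hrel : Set (Tile × Tile) :=
  {p | valid p.1 ∧ valid p.2 ∧ p.1.m = p.2.m ∧ p.1.r = p.2.l}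
def Vrel : Set (Tile × Tile) := {p | p.1.b = p.2.a}

def stepf (y : ℝ) : ℝ := if y < 1 then 2*y else 2*y/3
def backf (y : ℝ) : ℝ := if y < 4/3 then 3*y/2 else y/2

def Y : ℤ → ℝ := fun j => if 0 ≤ j then stepf^[j.toNat] 1 else backf^[(-j).toNat] 1

lemma stepf_mem {y : ℝ} (h : y ∈ Set.Ico (2/3 : ℝ) 2) : stepf y ∈ Set.Ico (2/3 : ℝ) 2 := by
  obtain ⟨h1, h2⟩ := h
  unfold stepf
  split <;> constructor <;> nlinarith

lemma backf_mem {y : ℝ} (h : y ∈ Set.Ico (2/3 : ℝ) 2) : backf y ∈ Set.Ico (2/3 : ℝ) 2 := by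
  obtain ⟨h1, h2⟩ := h
  unfold backf
  split <;> constructor <;> nlinarith

lemma stepf_backf {y : ℝ} (h : y ∈ Set.Ico (2/3 : ℝ) 2) : stepf (backf y) = y := by
  obtain ⟨h1, h2⟩ := h
  unfold backf
  rcases lt_or_ge y (4/3) with h3 | h3
  · rw [if_pos h3]; unfold stepf; rw [if_neg (by nlinarith)]; ring
  · rw [if_neg (not_lt.mpr h3)]; unfold stepf; rw [if_pos (by nlinarith)]; ring

lemma Y_mem (j : ℤ) : Y j ∈ Set.Ico (2/3 : ℝ) 2 := by
  have h1 : (1:ℝ) ∈ Set.Ico (2/3 : ℝ) 2 := by constructor <;> norm_num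
  have hs : ∀ n : ℕ, stepf^[n] 1 ∈ Set.Ico (2/3 : ℝ) 2 := by
    intro n; induction n with
    | zero => exact h1
    | succ n ih => rw [Function.iterate_succ_apply']; exact stepf_mem ih
  have hb : ∀ n : ℕ, backf^[n] 1 ∈ Set.Ico (2/3 : ℝ) 2 := by
    intro n; induction n with
    | zero => exact h1
    | succ n ih => rw [Function.iterate_succ_apply']; exact backf_mem ih
  unfold Y
  split
  · exact hs _
  · exact hb _

lemma Y_succ (j : ℤ) : Y (j + 1) = stepf (Y j) := by
  rcases le_or_gt 0 j with h | h
  · have h1 : 0 ≤ j + 1 := by omega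
    simp only [Y, if_pos h, if_pos h1]
    have : (j+1).toNat = j.toNat + 1 := by omega
    rw [this, Function.iterate_succ_apply']
  · have hY : Y j = backf (Y (j+1)) := by
      have h2 : ¬ (0 ≤ j) := by omega
      simp only [Y, if_neg h2]
      rcases eq_or_lt_of_le (show j + 1 ≤ 0 by omega) with he | hl
      · have : j = -1 := by omega
        subst this
        norm_num
      · have h3 : ¬ (0 ≤ j + 1) := by omega
        simp only [if_neg h3]
        have : (-j).toNat = (-(j+1)).toNat + 1 := by omega
        rw [this, Function.iterate_succ_apply']
    rw [hY, stepf_backf (Y_mem (j+1))]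

lemma Y_double {j : ℤ} (h : Y j < 1) : Y (j + 1) = 2 * Y j := by
  rw [Y_succ]; unfold stepf; rw [if_pos h]

lemma Y_twothirds {j : ℤ} (h : ¬ Y j < 1) : 3 * Y (j + 1) = 2 * Y j := by
  rw [Y_succ]; unfold stepf; rw [if_neg h]; ring

def F (j i : ℤ) : ℤ := ⌊(i : ℝ) * Y j⌋

def carry (j i : ℤ) : ℤ :=
  if Y j < 1 then 2 * F j i - F (j+1) i else 2 * F j i - 3 * F (j+1) i

def toFin3 (z : ℤ) : Fin 3 := ⟨z.toNat % 3, Nat.mod_lt _ (by norm_num)⟩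
def toFin4 (z : ℤ) : Fin 4 := ⟨z.toNat % 4, Nat.mod_lt _ (by norm_num)⟩

lemma toFin3_val {z : ℤ} (h0 : 0 ≤ z) (h3 : z < 3) : ((toFin3 z).val : ℤ) = z := by
  simp only [toFin3]
  omega

lemma toFin4_val {z : ℤ} (h0 : 0 ≤ z) (h4 : z < 4) : ((toFin4 z).val : ℤ) = z := by
  simp only [toFin4]
  omega

def xc : ℤ × ℤ → Tile := fun p =>
  { m := if Y p.2 < 1 then true else false
    a := toFin3 (F p.2 (p.1 + 1) - F p.2 p.1)
    b := toFin3 (F (p.2 + 1) (p.1 + 1) - F (p.2 + 1) p.1)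
    l := toFin4 (carry p.2 p.1 + 1)
    r := toFin4 (carry p.2 (p.1 + 1) + 1) }

lemma int_lt_of_cast_lt {a b : ℤ} (h : (a:ℝ) < (b:ℝ)) : a < b := by exact_mod_cast h

lemma F_le (j i : ℤ) : (F j i : ℝ) ≤ (i : ℝ) * Y j := Int.floor_le _
lemma lt_F_add_one (j i : ℤ) : (i : ℝ) * Y j < (F j i : ℝ) + 1 := Int.lt_floor_add_one _
lemma F_le' (j i : ℤ) : (F j (i+1) : ℝ) ≤ ((i : ℝ) + 1) * Y j := by
  have := F_le j (i+1); push_cast at this ⊢; linarith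
lemma lt_F_add_one' (j i : ℤ) : ((i : ℝ) + 1) * Y j < (F j (i+1) : ℝ) + 1 := by
  have := lt_F_add_one j (i+1); push_cast at this ⊢; linarith

lemma Fdiff_nonneg (j i : ℤ) : 0 ≤ F j (i+1) - F j i := by
  have hy := Y_mem j
  have h := int_lt_of_cast_lt (a := F j i) (b := F j (i+1) + 1)
    (by push_cast; nlinarith [F_le j i, lt_F_add_one' j i, hy.1, hy.2])
  omega

lemma Fdiff_lt_three (j i : ℤ) : F j (i+1) - F j i < 3 := by
  have hy := Y_mem j
  have h := int_lt_of_cast_lt (a := F j (i+1)) (b := F j i + 3)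
    (by push_cast; nlinarith [F_le' j i, lt_F_add_one j i, hy.1, hy.2])
  omega

lemma Fdiff_le_one {j : ℤ} (h : Y j < 1) (i : ℤ) : F j (i+1) - F j i ≤ 1 := by
  have hy := Y_mem j
  have h' := int_lt_of_cast_lt (a := F j (i+1)) (b := F j i + 2)
    (by push_cast; nlinarith [F_le' j i, lt_F_add_one j i, hy.1])
  omega

lemma Fdiff_ge_one {j : ℤ} (h : ¬ Y j < 1) (i : ℤ) : 1 ≤ F j (i+1) - F j i := by
  push_neg at h
  have hy := Y_mem j
  have h' := int_lt_of_cast_lt (a := F j i) (b := F j (i+1))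
    (by push_cast; nlinarith [F_le j i, lt_F_add_one' j i])
  omega

lemma carry_bounds (j i : ℤ) : -1 ≤ carry j i ∧ carry j i ≤ 2 := by
  have hy := Y_mem j
  have fa1 := F_le j i
  have fa2 := lt_F_add_one j i
  have ga1 := F_le (j+1) i
  have ga2 := lt_F_add_one (j+1) i
  unfold carry
  split
  · rename_i h
    have hd : Y (j+1) = 2 * Y j := Y_double h
    rw [hd] at ga1 ga2
    constructor
    · have h' := int_lt_of_cast_lt (a := -2) (b := 2 * F j i - F (j+1) i)
        (by push_cast; nlinarith)
      omega
    · have h' := int_lt_of_cast_lt (a := 2 * F j i - F (j+1) i) (b := 3)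
        (by push_cast; nlinarith)
      omega
  · rename_i h
    have hd : 3 * Y (j+1) = 2 * Y j := Y_twothirds h
    have hii : 3*((i:ℝ)*Y (j+1)) = 2*((i:ℝ)*Y j) := by linear_combination (i:ℝ) * hd
    constructor
    · have h' := int_lt_of_cast_lt (a := -2) (b := 2 * F j i - 3 * F (j+1) i)
        (by push_cast; nlinarith)
      omega
    · have h' := int_lt_of_cast_lt (a := 2 * F j i - 3 * F (j+1) i) (b := 3)
        (by push_cast; nlinarith)
      omega

lemma xc_a (i j : ℤ) : iA (xc (i, j)) = F j (i+1) - F j i :=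
  toFin3_val (Fdiff_nonneg j i) (Fdiff_lt_three j i)

lemma xc_b (i j : ℤ) : iB (xc (i, j)) = F (j+1) (i+1) - F (j+1) i :=
  toFin3_val (Fdiff_nonneg (j+1) i) (Fdiff_lt_three (j+1) i)

lemma xc_l (i j : ℤ) : iL (xc (i, j)) = carry j i := by
  have h := carry_bounds j i
  show ((toFin4 (carry j i + 1)).val : ℤ) - 1 = carry j i
  rw [toFin4_val (by omega) (by omega)]
  ring

lemma xc_r (i j : ℤ) : iR (xc (i, j)) = carry j (i+1) := by
  have h := carry_bounds j (i+1)
  show ((toFin4 (carry j (i+1) + 1)).val : ℤ) - 1 = carry j (i+1)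
  rw [toFin4_val (by omega) (by omega)]
  ring

lemma xc_valid (i j : ℤ) : valid (xc (i, j)) := by
  constructor
  · intro hm
    have h : Y j < 1 := by
      by_contra h
      simp only [xc, if_neg h] at hm
      exact Bool.false_ne_true hm
    refine ⟨?_, ?_, ?_⟩
    · rw [xc_a]; exact Fdiff_le_one h i
    · rw [xc_b]
      apply Fdiff_ge_one
      rw [Y_double h]
      have := (Y_mem j).1
      push_neg
      linarith
    · rw [xc_a, xc_b, xc_l, xc_r]
      simp only [carry, if_pos h]
      ring
  · intro hm
    have h : ¬ Y j < 1 := by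
      intro h
      simp only [xc, if_pos h] at hm
      simp at hm
    refine ⟨?_, ?_⟩
    · rw [xc_a]; exact Fdiff_ge_one h i
    · rw [xc_a, xc_b, xc_l, xc_r]
      simp only [carry, if_neg h]
      ring

lemma xc_constraints (i j : ℤ) :
    (xc (i, j), xc (i + 1, j)) ∈ Hrel ∧ (xc (i, j), xc (i, j + 1)) ∈ Vrel :=
  ⟨⟨xc_valid i j, xc_valid (i+1) j, rfl, rfl⟩, rfl⟩

lemma pow3_mod2 : ∀ e : ℕ, (3:ℤ) ^ e % 2 = 1 := by
  intro e
  induction e with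
  | zero => rfl
  | succ e ih => rw [pow_succ]; omega

lemma two_pow_ne_three_pow {d e : ℕ} (hd : 1 ≤ d) : (2:ℤ) ^ d ≠ 3 ^ e := by
  intro h
  obtain ⟨d', rfl⟩ : ∃ d', d = d' + 1 := ⟨d - 1, by omega⟩
  rw [pow_succ] at h
  have h3 := pow3_mod2 e
  omega

section Aperiodic

variable (x : ℤ × ℤ → Tile)

def Ax (i j : ℤ) : ℤ := iA (x (i, j))
def Lx (i j : ℤ) : ℤ := iL (x (i, j))
def cx (j : ℤ) : ℤ := if (x (0, j)).m then 1 else 3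
def Sx (j : ℤ) (n : ℕ) : ℤ := ∑ i ∈ Finset.range n, Ax x i j

variable (hx : ∀ i j : ℤ, (x (i, j), x (i + 1, j)) ∈ Hrel ∧ (x (i, j), x (i, j + 1)) ∈ Vrel)
include hx

lemma valid_x (i j : ℤ) : valid (x (i, j)) := (hx i j).1.1

lemma m_const (i j : ℤ) : (x (i, j)).m = (x (0, j)).m := by
  induction i using Int.induction_on with
  | zero => rfl
  | succ k ih => rw [← ih]; exact ((hx k j).1.2.2.1).symm
  | pred k ih =>
    rw [← ih]
    have h : (x (-(k:ℤ) - 1, j)).m = (x (-(k:ℤ) - 1 + 1, j)).m := (hx (-(k:ℤ)-1) j).1.2.2.1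
    rw [show (-(k:ℤ) - 1 + 1) = -(k:ℤ) by ring] at h
    exact h

lemma r_eq_l (i j : ℤ) : iR (x (i, j)) = iL (x (i + 1, j)) := by
  have h : (x (i, j)).r = (x (i + 1, j)).l := (hx i j).1.2.2.2
  simp only [iR, iL]
  rw [h]

lemma b_eq_a (i j : ℤ) : iB (x (i, j)) = iA (x (i, j + 1)) := by
  have h : (x (i, j)).b = (x (i, j + 1)).a := (hx i j).2
  simp only [iB, iA, h]

lemma Ax_bounds (i j : ℤ) : 0 ≤ Ax x i j ∧ Ax x i j ≤ 2 := by
  have := (x (i, j)).a.isLt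
  simp only [Ax, iA]
  omega

lemma Lx_bounds (i j : ℤ) : -1 ≤ Lx x i j ∧ Lx x i j ≤ 2 := by
  have := (x (i, j)).l.isLt
  simp only [Lx, iL]
  omega

lemma cx_cases (j : ℤ) : cx x j = 1 ∨ cx x j = 3 := by
  unfold cx; split <;> simp

lemma cell_eq (i j : ℤ) :
    2 * Ax x i j + Lx x i j - Lx x (i + 1) j = cx x j * Ax x i (j + 1) := by
  have hv := valid_x x hx i j
  have hm := m_const x hx i j
  have hrl := r_eq_l x hx i j
  have hba := b_eq_a x hx i j
  cases hm0 : (x (0, j)).m with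
  | true =>
    have h := hv.1 (hm.trans hm0)
    have hc : cx x j = 1 := by simp [cx, hm0]
    simp only [Ax, Lx, hc]
    rw [← hba, ← hrl]
    linarith [h.2.2]
  | false =>
    have h := hv.2 (hm.trans hm0)
    have hc : cx x j = 3 := by simp [cx, hm0]
    simp only [Ax, Lx, hc]
    rw [← hba, ← hrl]
    linarith [h.2]

lemma row_sum (j : ℤ) (n : ℕ) :
    2 * Sx x j n + Lx x 0 j - Lx x n j = cx x j * Sx x (j + 1) n := by
  induction n with
  | zero => simp [Sx]
  | succ n ih =>
    have hc := cell_eq x hx (n : ℤ) j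
    simp only [Sx, Finset.sum_range_succ] at *
    push_cast
    push_cast at ih hc
    ring_nf
    ring_nf at ih hc
    linarith [ih, hc]

lemma pos_row : ∃ j0 : ℤ, ∀ i : ℤ, 1 ≤ Ax x i j0 := by
  cases hm0 : (x (0, 0)).m with
  | false =>
    refine ⟨0, fun i => ?_⟩
    have hv := (valid_x x hx i 0).2 ((m_const x hx i 0).trans hm0)
    exact hv.1
  | true =>
    refine ⟨1, fun i => ?_⟩
    have hv := (valid_x x hx i 0).1 ((m_const x hx i 0).trans hm0)
    have hba := b_eq_a x hx i 0
    have : (0 : ℤ) + 1 = 1 := by norm_num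
    rw [this] at hba
    simp only [Ax]
    rw [← hba]
    exact hv.2.1

lemma pos_row_above {j : ℤ} (hm : (x (0, j)).m = true) (i : ℤ) : 1 ≤ Ax x i (j + 1) := by
  have hv := (valid_x x hx i j).1 ((m_const x hx i j).trans hm)
  have hba := b_eq_a x hx i j
  simp only [Ax]
  rw [← hba]
  exact hv.2.1

lemma Sx_le (j : ℤ) (n : ℕ) : Sx x j n ≤ 2 * n := by
  have h : Sx x j n ≤ ∑ _i ∈ Finset.range n, (2:ℤ) :=
    Finset.sum_le_sum (fun i _ => (Ax_bounds x hx i j).2)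
  simp only [Finset.sum_const, Finset.card_range, nsmul_eq_mul] at h
  omega

lemma Sx_ge (j : ℤ) (n : ℕ) (hpos : ∀ i : ℤ, 1 ≤ Ax x i j) : (n : ℤ) ≤ Sx x j n := by
  have h : ∑ _i ∈ Finset.range n, (1:ℤ) ≤ Sx x j n :=
    Finset.sum_le_sum (fun i _ => hpos i)
  simpa using h

lemma Sx_nonneg (j : ℤ) (n : ℕ) : 0 ≤ Sx x j n :=
  Finset.sum_nonneg (fun i _ => (Ax_bounds x hx i j).1)

lemma horiz_contra (N : ℕ) (hN : 1 ≤ N)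
    (hp : ∀ i j : ℤ, x (i + (N : ℤ), j) = x (i, j)) : False := by
  have exact_step : ∀ j : ℤ, 2 * Sx x j N = cx x j * Sx x (j + 1) N := by
    intro j
    have h := row_sum x hx j N
    have hL : Lx x (N : ℤ) j = Lx x 0 j := by
      unfold Lx
      rw [show ((N:ℤ)) = 0 + (N:ℤ) by ring, hp 0 j]
    rw [hL] at h
    linarith
  have Spos : ∀ j : ℤ, 1 ≤ Sx x j N := by
    intro j
    cases hm : (x (0, j)).m with
    | false =>
      have h : (N : ℤ) ≤ Sx x j N := by
        apply Sx_ge x hx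
        intro i
        exact ((valid_x x hx i j).2 ((m_const x hx i j).trans hm)).1
      omega
    | true =>
      have hc : cx x j = 1 := by simp [cx, hm]
      have hs := exact_step j
      rw [hc, one_mul] at hs
      have h1 : (N : ℤ) ≤ Sx x (j + 1) N := Sx_ge x hx _ _ (pos_row_above x hx hm)
      omega
  have iter : ∀ (j : ℤ) (k : ℕ), ∃ e : ℕ, 2 ^ k * Sx x j N = 3 ^ e * Sx x (j + k) N := by
    intro j k
    induction k with
    | zero => exact ⟨0, by simp⟩
    | succ k ih =>
      obtain ⟨e, he⟩ := ih
      have hs := exact_step (j + (k : ℤ))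
      have hcast : j + ((k : ℕ) + 1 : ℤ) = (j + (k : ℤ)) + 1 := by ring
      rcases cx_cases x hx (j + (k : ℤ)) with hc | hc
      · refine ⟨e, ?_⟩
        rw [hc, one_mul] at hs
        push_cast
        rw [show j + ((k:ℤ) + 1) = j + (k:ℤ) + 1 from by ring]
        linear_combination 2 * he + 3 ^ e * hs
      · refine ⟨e + 1, ?_⟩
        rw [hc] at hs
        push_cast
        rw [show j + ((k:ℤ) + 1) = j + (k:ℤ) + 1 from by ring]
        linear_combination 2 * he + 3 ^ e * hs
  -- pigeonhole
  set s : ℕ → ℤ := fun t => Sx x t N with hs_def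
  have hmap : ∀ t ∈ Finset.range (2*N+1), s t ∈ Finset.Icc (1:ℤ) (2*N) := by
    intro t _
    simp only [Finset.mem_Icc]
    exact ⟨Spos t, Sx_le x hx t N⟩
  have hcard : (Finset.Icc (1:ℤ) (2*N)).card < (Finset.range (2*N+1)).card := by
    rw [Finset.card_range, Int.card_Icc]
    omega
  obtain ⟨t1, ht1, t2, ht2, hne, heq⟩ :=
    Finset.exists_ne_map_eq_of_card_lt_of_maps_to hcard hmap
  obtain ⟨u, v, huv, hsv⟩ : ∃ u v : ℕ, u < v ∧ s u = s v := by
    rcases lt_or_gt_of_ne hne with h | h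
    · exact ⟨t1, t2, h, heq⟩
    · exact ⟨t2, t1, h, heq.symm⟩
  obtain ⟨e, he⟩ := iter (u : ℤ) (v - u)
  have hcast : ((u : ℤ) + ((v - u : ℕ) : ℤ)) = (v : ℤ) := by
    have : u ≤ v := huv.le
    push_cast [Nat.cast_sub this]
    ring
  rw [hcast] at he
  have hsv' : Sx x (u:ℤ) N = Sx x (v:ℤ) N := hsv
  rw [hsv'] at he
  have hne0 : Sx x (v:ℤ) N ≠ 0 := by have := Spos (v:ℤ); omega
  have hpow : (2:ℤ) ^ (v - u) = 3 ^ e := by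
    have h0 : ((2:ℤ) ^ (v - u) - 3 ^ e) * Sx x (v:ℤ) N = 0 := by linear_combination he
    rcases mul_eq_zero.mp h0 with h | h
    · linarith
    · exact absurd h hne0
  exact two_pow_ne_three_pow (by omega) hpow

lemma row_sum_err (j : ℤ) (n : ℕ) : ∃ δ : ℤ, -3 ≤ δ ∧ δ ≤ 3 ∧
    2 * Sx x j n = cx x j * Sx x (j + 1) n + δ := by
  refine ⟨Lx x n j - Lx x 0 j, ?_, ?_, ?_⟩
  · have h1 := Lx_bounds x hx (n : ℤ) j
    have h2 := Lx_bounds x hx 0 j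
    omega
  · have h1 := Lx_bounds x hx (n : ℤ) j
    have h2 := Lx_bounds x hx 0 j
    omega
  · have h := row_sum x hx j n
    linarith

lemma iter_approx (n : ℕ) (j : ℤ) (k : ℕ) : ∃ e : ℕ, e ≤ k ∧ ∃ E : ℤ,
    -3^(k+2) ≤ E ∧ E ≤ 3^(k+2) ∧ 2^k * Sx x j n = 3^e * Sx x (j + k) n + E := by
  induction k with
  | zero => exact ⟨0, le_refl 0, 0, by norm_num, by norm_num, by simp⟩
  | succ k ih =>
    obtain ⟨e, he, E, hE1, hE2, heq⟩ := ih
    obtain ⟨δ, hδ1, hδ2, hδeq⟩ := row_sum_err x hx (j + (k : ℤ)) n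
    have hp1 : (0:ℤ) ≤ 3 ^ e := by positivity
    have hp2 : (3:ℤ) ^ e ≤ 3 ^ k := pow_le_pow_right₀ (by norm_num) he
    have hk0 : (0:ℤ) ≤ 3 ^ k := by positivity
    have hub : 3 ^ e * δ ≤ 3 ^ e * 3 := mul_le_mul_of_nonneg_left hδ2 hp1
    have hlb : 3 ^ e * (-3) ≤ 3 ^ e * δ := mul_le_mul_of_nonneg_left hδ1 hp1
    have hq1 : (3:ℤ) ^ (k + 1 + 2) = 27 * 3 ^ k := by ring
    have hq2 : (3:ℤ) ^ (k + 2) = 9 * 3 ^ k := by ring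
    rcases cx_cases x hx (j + (k : ℤ)) with hc | hc
    · refine ⟨e, by omega, 3 ^ e * δ + 2 * E, ?_, ?_, ?_⟩
      · rw [hq1]; rw [hq2] at hE1; linarith
      · rw [hq1]; rw [hq2] at hE2; linarith
      · rw [hc, one_mul] at hδeq
        push_cast
        rw [show j + ((k:ℤ) + 1) = j + (k:ℤ) + 1 from by ring]
        linear_combination 2 * heq + 3 ^ e * hδeq
    · refine ⟨e + 1, by omega, 3 ^ e * δ + 2 * E, ?_, ?_, ?_⟩
      · rw [hq1]; rw [hq2] at hE1; linarith
      · rw [hq1]; rw [hq2] at hE2; linarith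
      · rw [hc] at hδeq
        push_cast
        rw [show j + ((k:ℤ) + 1) = j + (k:ℤ) + 1 from by ring]
        linear_combination 2 * heq + 3 ^ e * hδeq

end Aperiodic

section Shift

lemma shift_sum (g : ℤ → ℤ) (hg : ∀ i : ℤ, 0 ≤ g i ∧ g i ≤ 2) (n : ℕ) :
    ∀ d : ℤ, ((∑ i ∈ Finset.range n, g ((i:ℤ) + d)) - ∑ i ∈ Finset.range n, g (i:ℤ)).natAbs
      ≤ 2 * d.natAbs := by
  have hstep : ∀ d : ℤ, (∑ i ∈ Finset.range n, g ((i:ℤ) + (d + 1)))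
      = (∑ i ∈ Finset.range n, g ((i:ℤ) + d)) + g ((n:ℤ) + d) - g d := by
    intro d
    have h1 : (∑ i ∈ Finset.range n, g ((i:ℤ) + (d + 1)))
        = ∑ i ∈ Finset.range n, g (((i + 1 : ℕ):ℤ) + d) := by
      apply Finset.sum_congr rfl
      intro i _
      congr 1
      push_cast
      ring
    have h2 := Finset.sum_range_succ' (fun i : ℕ => g ((i:ℤ) + d)) n
    have h3 := Finset.sum_range_succ (fun i : ℕ => g ((i:ℤ) + d)) n
    simp only [Nat.cast_zero, zero_add] at h2
    rw [h1]
    omega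
  intro d
  induction d using Int.induction_on with
  | zero => simp
  | succ k ih =>
    have h := hstep (k : ℤ)
    have hg1 := hg ((n:ℤ) + k)
    have hg2 := hg (k : ℤ)
    omega
  | pred k ih =>
    have h := hstep (-(k:ℤ) - 1)
    rw [show (-(k:ℤ) - 1) + 1 = -(k:ℤ) from by ring] at h
    have hg1 := hg ((n:ℤ) + (-(k:ℤ) - 1))
    have hg2 := hg (-(k:ℤ) - 1)
    omega

end Shift

section Aperiodic2

variable (x : ℤ × ℤ → Tile)
variable (hx : ∀ i j : ℤ, (x (i, j), x (i + 1, j)) ∈ Hrel ∧ (x (i, j), x (i, j + 1)) ∈ Vrel)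
include hx

lemma vert_contra (b : ℕ) (hb : 1 ≤ b) (p' : ℤ)
    (hp : ∀ i j : ℤ, x (i + p', j + (b : ℤ)) = x (i, j)) : False := by
  obtain ⟨j0, hj0⟩ := pos_row x hx
  set P : ℕ := p'.natAbs with hP
  set n : ℕ := 3 ^ b * (2 * P) + 3 ^ (b + 2) + 1 with hn_def
  obtain ⟨e, heb, E, hE1, hE2, heq⟩ := iter_approx x hx n j0 b
  have hAshift : ∀ i : ℤ, Ax x (i + (-p')) j0 = Ax x i (j0 + (b:ℤ)) := by
    intro i
    have h := hp (i + (-p')) j0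
    rw [show i + -p' + p' = i from by ring] at h
    unfold Ax
    rw [h]
  have hS1 : Sx x (j0 + (b:ℤ)) n = ∑ i ∈ Finset.range n, (fun i : ℤ => Ax x i j0) ((i:ℤ) + (-p')) := by
    unfold Sx
    exact (Finset.sum_congr rfl (fun i _ => (hAshift (i:ℤ)).symm))
  have hshift := shift_sum (fun i : ℤ => Ax x i j0) (fun i => Ax_bounds x hx i j0) n (-p')
  rw [← hS1] at hshift
  have hS0 : (∑ i ∈ Finset.range n, (fun i : ℤ => Ax x i j0) (i:ℤ)) = Sx x j0 n := rfl
  rw [hS0] at hshift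
  rw [Int.natAbs_neg] at hshift
  set S0 := Sx x j0 n with hS0d
  set Sb := Sx x (j0 + (b:ℤ)) n with hSbd
  have hε : -(2*(P:ℤ)) ≤ Sb - S0 ∧ Sb - S0 ≤ 2*(P:ℤ) := by omega
  have hnS : (n : ℤ) ≤ S0 := Sx_ge x hx j0 n hj0
  have hS0nn : (0:ℤ) ≤ S0 := le_trans (by positivity) hnS
  have hp1 : (0:ℤ) ≤ 3 ^ e := by positivity
  have hp2 : (3:ℤ) ^ e ≤ 3 ^ b := pow_le_pow_right₀ (by norm_num) heb
  have hDne : (2:ℤ) ^ b - 3 ^ e ≠ 0 := sub_ne_zero.mpr (two_pow_ne_three_pow hb)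
  have hkey : ((2:ℤ) ^ b - 3 ^ e) * S0 = 3 ^ e * (Sb - S0) + E := by linear_combination heq
  have hub : 3 ^ e * (Sb - S0) ≤ 3 ^ b * (2 * (P:ℤ)) := by
    calc 3 ^ e * (Sb - S0) ≤ 3 ^ e * (2 * (P:ℤ)) := mul_le_mul_of_nonneg_left hε.2 hp1
    _ ≤ 3 ^ b * (2 * (P:ℤ)) := mul_le_mul_of_nonneg_right hp2 (by positivity)
  have hlb : -(3 ^ b * (2 * (P:ℤ))) ≤ 3 ^ e * (Sb - S0) := by
    have h1 : 3 ^ e * (-(2 * (P:ℤ))) ≤ 3 ^ e * (Sb - S0) := mul_le_mul_of_nonneg_left hε.1 hp1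
    have h2 : 3 ^ e * (2 * (P:ℤ)) ≤ 3 ^ b * (2 * (P:ℤ)) := mul_le_mul_of_nonneg_right hp2 (by positivity)
    linarith
  have hncast : (n : ℤ) = 3 ^ b * (2 * (P:ℤ)) + 3 ^ (b + 2) + 1 := by
    rw [hn_def]; push_cast; ring
  rcases lt_or_gt_of_ne hDne with hD | hD
  · have hD1 : (2:ℤ) ^ b - 3 ^ e ≤ -1 := by omega
    have h1 : ((2:ℤ) ^ b - 3 ^ e) * S0 ≤ (-1) * S0 :=
      mul_le_mul_of_nonneg_right hD1 hS0nn
    linarith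
  · have hD1 : (1:ℤ) ≤ (2:ℤ) ^ b - 3 ^ e := by omega
    have h1 : (1:ℤ) * S0 ≤ ((2:ℤ) ^ b - 3 ^ e) * S0 :=
      mul_le_mul_of_nonneg_right hD1 hS0nn
    linarith

end Aperiodic2

end Stmt12

/-- There exists a nonempty two-dimensional subshift of finite type (given by
nearest-neighbor horizontal and vertical relations) with no periodic configuration. -/
theorem stmt12 :
    ∃ (A : Type) (_ : Fintype A) (_ : Nonempty A) (H V : Set (A × A)),
      (∃ x : ℤ × ℤ → A, ∀ i j : ℤ,
        (x (i, j), x (i + 1, j)) ∈ H ∧ (x (i, j), x (i, j + 1)) ∈ V) ∧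
      (∀ x : ℤ × ℤ → A,
        (∀ i j : ℤ, (x (i, j), x (i + 1, j)) ∈ H ∧ (x (i, j), x (i, j + 1)) ∈ V) →
        ¬ ∃ ab : ℤ × ℤ, ab ≠ (0, 0) ∧
          ∀ i j : ℤ, x (i + ab.1, j + ab.2) = x (i, j)) := by
  refine ⟨Stmt12.Tile, inferInstance, ⟨⟨false, 0, 0, 0, 0⟩⟩, Stmt12.Hrel, Stmt12.Vrel,
    ⟨Stmt12.xc, fun i j => Stmt12.xc_constraints i j⟩, ?_⟩
  rintro x hx ⟨⟨p, q⟩, hne, hper⟩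
  simp only at hper
  by_cases hq : q = 0
  · subst hq
    have hp0 : p ≠ 0 := by
      intro h
      exact hne (by rw [h])
    set N := p.natAbs with hNdef
    have hN : 1 ≤ N := by omega
    have hp : ∀ i j : ℤ, x (i + (N : ℤ), j) = x (i, j) := by
      intro i j
      rcases lt_or_gt_of_ne hp0 with h | h
      · have hcast : (N : ℤ) = -p := by omega
        have h2 := hper (i + (N : ℤ)) j
        rw [hcast] at h2 ⊢
        rw [show i + -p + p = i from by ring, add_zero] at h2
        exact h2.symm
      · have hcast : (N : ℤ) = p := by omega
        have h2 := hper i j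
        rw [add_zero] at h2
        rw [hcast]
        exact h2
    exact Stmt12.horiz_contra x hx N hN hp
  · set b := q.natAbs with hbdef
    have hb : 1 ≤ b := by omega
    rcases lt_or_gt_of_ne hq with h | h
    · have hcast : (b : ℤ) = -q := by omega
      have hp : ∀ i j : ℤ, x (i + -p, j + (b : ℤ)) = x (i, j) := by
        intro i j
        have h2 := hper (i + -p) (j + -q)
        rw [show i + -p + p = i from by ring, show j + -q + q = j from by ring] at h2
        rw [hcast]
        exact h2.symm
      exact Stmt12.vert_contra x hx b hb (-p) hp
    · have hcast : (b : ℤ) = q := by omega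
      have hp : ∀ i j : ℤ, x (i + p, j + (b : ℤ)) = x (i, j) := by
        intro i j
        rw [hcast]
        exact hper i j
      exact Stmt12.vert_contra x hx b hb p hp
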